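/- arXiv:1004.3695 — 2 statements merged into one kernel-verified Lean document; each statement's English description precedes it below -/
import Mathlib

section
/- For any odd positive integer n, the number of elements of exact order n in the group (Z/nZ) × (Z/nZ) equals ψ(n), where ψ is the multiplicative arithmetic function determined by ψ(p^r) = p^{2r-2}(p^2 - 1) for primes p and r ≥ 1, and ψ(1) = 1. -/
/-- The multiplicative arithmetic function `ψ` with `ψ(1) = 1` and
`ψ(p^r) = p^(2r-2) * (p² - 1)` for every prime `p` and `r ≥ 1`. -/
def psi (n : ℕ) : ℕ :=
  n.factorization.prod fun p r => p ^ (2 * r - 2) * (p ^ 2 - 1)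

lemma psi_one : psi 1 = 1 := by simp [psi]

lemma psi_prime_pow {p r : ℕ} (hp : p.Prime) (hr : 0 < r) :
    psi (p ^ r) = p ^ (2 * r - 2) * (p ^ 2 - 1) := by
  unfold psi
  rw [hp.factorization_pow]
  rw [Finsupp.prod, Finsupp.support_single_ne_zero _ hr.ne']
  simp

lemma psi_mul {a b : ℕ} (hab : Nat.Coprime a b) : psi (a * b) = psi a * psi b := by
  unfold psi
  rw [Nat.factorization_mul_of_coprime hab,
    Finsupp.prod_add_index_of_disjoint]
  simpa using hab.disjoint_primeFactors

/-- number of solutions to `p^(r-1) • x = 0` in `ZMod (p^r)` is `p^(r-1)`. -/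
lemma ker_card {p r : ℕ} (hp : p.Prime) (hr : 0 < r) :
    Nat.card {x : ZMod (p ^ r) // p ^ (r - 1) • x = 0} = p ^ (r - 1) := by
  haveI : NeZero (p ^ r) := ⟨pow_ne_zero _ hp.pos.ne'⟩
  have hprr : p ^ r = p ^ (r - 1) * p := by
    rw [← pow_succ, Nat.sub_add_cancel hr]
  have hdvd2 : ∀ v : ℕ, p ^ r ∣ p ^ (r - 1) * v ↔ p ∣ v := by
    intro v
    rw [hprr]
    exact Nat.mul_dvd_mul_iff_left (pow_pos hp.pos _)
  have key : ∀ x : ZMod (p ^ r), p ^ (r - 1) • x = 0 ↔ p ∣ x.val := by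
    intro x
    conv_lhs => rw [← ZMod.natCast_rightInverse x]
    rw [nsmul_eq_mul, ← Nat.cast_mul, ZMod.natCast_eq_zero_iff]
    exact hdvd2 x.val
  have e : {x : ZMod (p ^ r) // p ∣ x.val} ≃ Fin (p ^ (r - 1)) := by
    refine ⟨fun x => ⟨x.1.val / p, ?_⟩, fun k => ⟨((p * k : ℕ) : ZMod (p ^ r)), ?_⟩, ?_, ?_⟩
    · apply Nat.div_lt_of_lt_mul
      rw [mul_comm, ← hprr]
      exact ZMod.val_lt x.1
    · have hlt : p * (k : ℕ) < p ^ r := by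
        rw [hprr, mul_comm]
        exact (Nat.mul_lt_mul_right hp.pos).mpr k.2
      rw [ZMod.val_cast_of_lt hlt]
      exact ⟨k, rfl⟩
    · rintro ⟨x, hx⟩
      ext
      simp only
      rw [Nat.mul_div_cancel' hx]
      exact ZMod.natCast_rightInverse x
    · rintro ⟨k, hk⟩
      have hlt : p * k < p ^ r := by
        rw [hprr, mul_comm]
        exact (Nat.mul_lt_mul_right hp.pos).mpr hk
      ext
      simp only
      rw [ZMod.val_cast_of_lt hlt, Nat.mul_div_cancel_left _ hp.pos]
  rw [Nat.card_congr ((Equiv.subtypeEquivRight key).trans e), Nat.card_eq_fintype_card,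
    Fintype.card_fin]

lemma card_prime_pow {p r : ℕ} (hp : p.Prime) (hr : 0 < r) :
    Nat.card {x : ZMod (p ^ r) × ZMod (p ^ r) // addOrderOf x = p ^ r}
      = p ^ (2 * r - 2) * (p ^ 2 - 1) := by
  haveI : NeZero (p ^ r) := ⟨pow_ne_zero _ hp.pos.ne'⟩
  classical
  -- every element has order dividing p^r
  have hdvd : ∀ x : ZMod (p ^ r) × ZMod (p ^ r), addOrderOf x ∣ p ^ r := by
    intro x
    apply addOrderOf_dvd_of_nsmul_eq_zero
    have h1 : ∀ y : ZMod (p ^ r), (p ^ r) • y = 0 := by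
      intro y
      rw [nsmul_eq_mul, ZMod.natCast_self, zero_mul]
    rw [Prod.ext_iff]
    constructor <;> simp only [Prod.smul_fst, Prod.smul_snd, h1, Prod.fst_zero, Prod.snd_zero]
  have keyiff : ∀ x : ZMod (p ^ r) × ZMod (p ^ r),
      addOrderOf x = p ^ r ↔ ¬ (p ^ (r - 1) • x = 0) := by
    intro x
    rw [← addOrderOf_dvd_iff_nsmul_eq_zero]
    constructor
    · intro h hc
      rw [h] at hc
      have := (Nat.pow_dvd_pow_iff_le_right hp.one_lt).mp hc
      omega
    · intro h
      obtain ⟨s, hs, hx⟩ := (Nat.dvd_prime_pow hp).mp (hdvd x)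
      rcases Nat.lt_or_ge s r with hsr | hsr
      · exfalso
        exact h (hx ▸ pow_dvd_pow p (by omega))
      · rw [hx]; congr 1; omega
  -- the set with p^(r-1) • x = 0 has card p^(2(r-1))
  have split : ∀ x : ZMod (p ^ r) × ZMod (p ^ r),
      p ^ (r - 1) • x = 0 ↔ p ^ (r - 1) • x.1 = 0 ∧ p ^ (r - 1) • x.2 = 0 := by
    intro x
    rw [Prod.ext_iff]
    constructor <;> exact fun h => ⟨by simpa using h.1, by simpa using h.2⟩
  have hker : Nat.card {x : ZMod (p ^ r) × ZMod (p ^ r) // p ^ (r - 1) • x = 0}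
      = p ^ (r - 1) * p ^ (r - 1) := by
    rw [Nat.card_congr ((Equiv.subtypeEquivRight split).trans
      (Equiv.subtypeProdEquivProd (p := fun a : ZMod (p ^ r) => p ^ (r - 1) • a = 0)
        (q := fun a : ZMod (p ^ r) => p ^ (r - 1) • a = 0))), Nat.card_prod,
      ker_card hp hr]
  -- total minus kernel
  have htot : Nat.card (ZMod (p ^ r) × ZMod (p ^ r)) = p ^ r * p ^ r := by
    rw [Nat.card_prod, Nat.card_zmod]
  rw [Nat.card_congr (Equiv.subtypeEquivRight keyiff)]
  rw [Nat.card_eq_fintype_card, Fintype.card_subtype_compl]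
  rw [← Nat.card_eq_fintype_card, ← Nat.card_eq_fintype_card, htot, hker]
  have h1 : p ^ r * p ^ r = p ^ (2 * r - 2) * p ^ 2 := by
    rw [← pow_add, ← pow_add]; congr 1; omega
  have h2 : p ^ (r - 1) * p ^ (r - 1) = p ^ (2 * r - 2) := by
    rw [← pow_add]; congr 1; omega
  rw [h1, h2, Nat.mul_sub, mul_one]

lemma order_dvd_self {m : ℕ} (u : ZMod m × ZMod m) : addOrderOf u ∣ m := by
  apply addOrderOf_dvd_of_nsmul_eq_zero
  have h1 : ∀ y : ZMod m, m • y = 0 := by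
    intro y
    rw [nsmul_eq_mul, ZMod.natCast_self, zero_mul]
  rw [Prod.ext_iff]
  exact ⟨by simpa using h1 u.1, by simpa using h1 u.2⟩

lemma nat_aux {o1 o2 a b : ℕ} (hb : 0 < b) (ho1 : 0 < o1)
    (h : o1 * o2 = a * b) (h1 : o1 ∣ a) (h2 : o2 ∣ b) : o1 = a ∧ o2 = b := by
  obtain ⟨k, hk⟩ := h1
  have h2b : o2 = b := by
    have hcancel : o2 = k * b := by
      have heq : o1 * o2 = o1 * (k * b) := by rw [h, hk]; ring
      exact Nat.eq_of_mul_eq_mul_left ho1 heq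
    exact Nat.dvd_antisymm h2 ⟨k, by rw [hcancel, mul_comm]⟩
  refine ⟨?_, h2b⟩
  have heq2 : o1 * b = a * b := by rw [h2b] at h; exact h
  exact Nat.eq_of_mul_eq_mul_right hb heq2

lemma card_mul {a b : ℕ} (ha : 0 < a) (hb : 0 < b) (hab : Nat.Coprime a b) :
    Nat.card {x : ZMod (a * b) × ZMod (a * b) // addOrderOf x = a * b}
      = Nat.card {x : ZMod a × ZMod a // addOrderOf x = a}
        * Nat.card {x : ZMod b × ZMod b // addOrderOf x = b} := by
  haveI : NeZero a := ⟨ha.ne'⟩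
  haveI : NeZero b := ⟨hb.ne'⟩
  haveI : NeZero (a * b) := ⟨by positivity⟩
  let e : ZMod (a * b) ≃+ ZMod a × ZMod b := (ZMod.chineseRemainder hab).toAddEquiv
  let E : ZMod (a * b) × ZMod (a * b) ≃+ (ZMod a × ZMod a) × (ZMod b × ZMod b) :=
    (AddEquiv.prodCongr e e).trans (AddEquiv.prodProdProdComm _ _ _ _)
  have hE : ∀ x : ZMod (a * b) × ZMod (a * b), addOrderOf (E x) = addOrderOf x := fun x =>
    addOrderOf_injective E.toAddMonoidHom E.injective x
  have e1 : {x : ZMod (a * b) × ZMod (a * b) // addOrderOf x = a * b}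
      ≃ {y : (ZMod a × ZMod a) × (ZMod b × ZMod b) // addOrderOf y = a * b} :=
    (E.toEquiv.subtypeEquiv fun x => by rw [show addOrderOf (E.toEquiv x) = addOrderOf x from hE x])
  have keyiff : ∀ y : (ZMod a × ZMod a) × (ZMod b × ZMod b),
      addOrderOf y = a * b ↔ addOrderOf y.1 = a ∧ addOrderOf y.2 = b := by
    intro y
    rw [Prod.addOrderOf]
    have h1 : addOrderOf y.1 ∣ a := order_dvd_self y.1
    have h2 : addOrderOf y.2 ∣ b := order_dvd_self y.2
    constructor
    · intro h
      have hcop : Nat.Coprime (addOrderOf y.1) (addOrderOf y.2) :=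
        Nat.Coprime.coprime_dvd_left h1 (Nat.Coprime.coprime_dvd_right h2 hab)
      rw [Nat.Coprime.lcm_eq_mul hcop] at h
      exact nat_aux hb (addOrderOf_pos y.1) h h1 h2
    · rintro ⟨h1, h2⟩
      rw [h1, h2, Nat.Coprime.lcm_eq_mul hab]
  have e2 : {y : (ZMod a × ZMod a) × (ZMod b × ZMod b) // addOrderOf y = a * b}
      ≃ {u : ZMod a × ZMod a // addOrderOf u = a} × {v : ZMod b × ZMod b // addOrderOf v = b} :=
    (Equiv.subtypeEquivRight keyiff).trans
      (Equiv.subtypeProdEquivProd (p := fun u : ZMod a × ZMod a => addOrderOf u = a)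
        (q := fun v : ZMod b × ZMod b => addOrderOf v = b))
  rw [Nat.card_congr (e1.trans e2), Nat.card_prod]

/-- For odd positive `n`, the number of elements of exact (additive) order `n` in
`(ℤ/nℤ) × (ℤ/nℤ)` equals `ψ(n)`. -/
theorem stmt7 (n : ℕ) (hn : Odd n) (hpos : 0 < n) :
    Nat.card {x : ZMod n × ZMod n // addOrderOf x = n} = psi n := by
  clear hn
  induction n using Nat.recOnPosPrimePosCoprime with
  | prime_pow p r hp hr => rw [card_prime_pow hp hr, psi_prime_pow hp hr]
  | zero => exact absurd hpos (lt_irrefl 0)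
  | one =>
      rw [psi_one]
      have h : ∀ x : ZMod 1 × ZMod 1, addOrderOf x = 1 := by
        intro x
        rw [Subsingleton.elim x 0, addOrderOf_zero]
      rw [Nat.card_congr (Equiv.subtypeUnivEquiv h), Nat.card_prod, Nat.card_zmod]
  | coprime a b ha hb hab iha ihb =>
      rw [card_mul (by omega) (by omega) hab, psi_mul hab,
        iha (by omega), ihb (by omega)]
end

section
/- The elliptic curve E: Y^2 + Y = X^3 over F_2 has exactly 3 points over F_2 (two affine points (0,0), (0,1) and the point at infinity), and more generally exactly 2^d + 1 points over F_{2^d} for every odd positive integer d. -/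
/-- The elliptic curve `Y² + Y = X³` over a field of characteristic 2, as a Weierstrass
curve with coefficients `a₁ = a₂ = a₄ = a₆ = 0`, `a₃ = 1`. -/
noncomputable def Wss (k : Type*) [Field k] : WeierstrassCurve.Affine k :=
  { a₁ := 0, a₂ := 0, a₃ := 1, a₄ := 0, a₆ := 0 }

/-- The cubing map is bijective on a finite field whose unit group has order coprime to 3. -/
lemma cube_bijective (k : Type*) [Field k] [Finite k] (h : (Nat.card kˣ).Coprime 3) :
    Function.Bijective (fun a : k => a ^ 3) := by
  rw [Finite.surjective_iff_bijective.symm]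
  intro b
  rcases eq_or_ne b 0 with rfl | hb
  · exact ⟨0, by simp⟩
  · obtain ⟨u, hu⟩ := (powCoprime h).surjective (Units.mk0 b hb)
    exact ⟨(u : k), by simpa using congrArg Units.val hu⟩

/-- Points of `Wss k` are in bijection with `Option k` when char `k = 2` and cubing is
bijective. -/
lemma card_Wss (k : Type*) [Field k] [Finite k] [CharP k 2]
    (h : (Nat.card kˣ).Coprime 3) :
    Nat.card (Wss k).Point = Nat.card k + 1 := by
  have hchar : (2 : k) = 0 := by exact_mod_cast CharP.cast_eq_zero k 2
  have hns : ∀ x y : k, (Wss k).Nonsingular x y ↔ y ^ 2 + y = x ^ 3 := by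
    intro x y
    rw [WeierstrassCurve.Affine.nonsingular_iff, WeierstrassCurve.Affine.equation_iff]
    simp only [Wss, hchar]
    constructor
    · rintro ⟨h1, -⟩; linear_combination h1
    · intro h1
      refine ⟨by linear_combination h1, Or.inr ?_⟩
      intro hy
      have : (1 : k) = 0 := by linear_combination -hy + (1 + y) * hchar
      exact one_ne_zero this
  -- Point ≃ Option {p : k × k // Nonsingular}
  let e1 : (Wss k).Point ≃ Option {p : k × k // (Wss k).Nonsingular p.1 p.2} :=
    { toFun := fun P => match P with
        | .zero => none
        | @WeierstrassCurve.Affine.Point.some _ _ _ x y hP => some ⟨(x, y), hP⟩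
      invFun := fun o => match o with
        | none => .zero
        | some ⟨(x, y), hP⟩ => .some x y hP
      left_inv := by rintro (_ | _) <;> rfl
      right_inv := by rintro (_ | ⟨⟨x, y⟩, hP⟩) <;> rfl }
  -- {p // Nonsingular} ≃ k via p ↦ p.2
  obtain ⟨c, hc⟩ : ∃ c : k → k, ∀ a : k, (c a) ^ 3 = a := by
    have := cube_bijective k h
    exact ⟨fun a => (Equiv.ofBijective _ this).symm a,
      fun a => (Equiv.ofBijective _ this).apply_symm_apply a⟩
  let e2 : {p : k × k // (Wss k).Nonsingular p.1 p.2} ≃ k :=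
    { toFun := fun p => p.1.2
      invFun := fun y => ⟨(c (y ^ 2 + y), y), (hns _ _).mpr (hc _).symm⟩
      left_inv := by
        rintro ⟨⟨x, y⟩, hP⟩
        have hxy : y ^ 2 + y = x ^ 3 := (hns x y).mp hP
        have hinj := (cube_bijective k h).injective
        have : c (y ^ 2 + y) = x := hinj (show c (y ^ 2 + y) ^ 3 = x ^ 3 by rw [hc, hxy])
        simp [this]
      right_inv := fun y => rfl }
  rw [Nat.card_congr (e1.trans (Equiv.optionCongr e2)), Finite.card_option]

/-- The curve `Y² + Y = X³` has exactly 3 points over `F₂` and, more generally, exactly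
`2^d + 1` points over `F_{2^d}` for every odd positive integer `d`. -/
theorem stmt13 :
    Nat.card (Wss (ZMod 2)).Point = 3 ∧
      ∀ d : ℕ, Odd d → 0 < d → Nat.card (Wss (GaloisField 2 d)).Point = 2 ^ d + 1 := by
  constructor
  · rw [card_Wss (ZMod 2) (by rw [Nat.card_units, Nat.card_zmod]; decide), Nat.card_zmod]
  · intro d hd hd0
    have h2 : Nat.card (GaloisField 2 d) = 2 ^ d := GaloisField.card 2 d hd0.ne'
    have hcop : (Nat.card (GaloisField 2 d)ˣ).Coprime 3 := by
      rw [Nat.card_units, h2]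
      obtain ⟨m, rfl⟩ := hd
      have h4 : 4 ^ m % 3 = 1 := by
        rw [Nat.pow_mod]
        simp
      have heq : 2 ^ (2 * m + 1) = 2 * 4 ^ m := by
        rw [pow_succ, pow_mul]; ring
      have hmod : 2 ^ (2 * m + 1) % 3 = 2 := by
        rw [heq, Nat.mul_mod, h4]
      have hpos : 1 ≤ 2 ^ (2 * m + 1) := Nat.one_le_two_pow
      rw [Nat.coprime_comm]
      refine (Nat.Prime.coprime_iff_not_dvd (by norm_num)).mpr ?_
      intro hdvd
      obtain ⟨t, ht⟩ := hdvd
      generalize hn : 2 ^ (2 * m + 1) = n at hmod hpos ht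
      omega
    rw [card_Wss (GaloisField 2 d) hcop, h2]
end
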